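/- Let x ∈ m̃, let B_x be the skew-symmetric bilinear form on m(x) given by B_x(y1,y2) = ⟨x,[y1,y2]⟩, and let B̃_x be its restriction to m̃(x) ⊆ m(x). Let L ⊆ m(x) be a subspace that is maximal isotropic with respect to B_x, i.e. B_x(L,L) = 0 and every y ∈ m(x) with B_x(y,L) = 0 belongs to L. Let L̃ be the image of L under the orthogonal projection of m onto m̃. If L̃ ⊆ m̃(x) and B̃_x(L̃,L̃) = 0, then L̃ is maximal isotropic in m̃(x) with respect to B̃_x: every y ∈ m̃(x) with B̃_x(y,L̃) = 0 belongs to L̃. -/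

import Mathlib

open Module

theorem stmt6 {g : Type*} [LieRing g] [LieAlgebra ℝ g] [FiniteDimensional ℝ g]
    -- an ad-invariant inner product on g
    (B : g →ₗ[ℝ] g →ₗ[ℝ] ℝ)
    (hsymm : ∀ x y : g, B x y = B y x)
    (hpos : ∀ x : g, x ≠ 0 → 0 < B x x)
    (hinv : ∀ x y z : g, B ⁅z, x⁆ y + B x ⁅z, y⁆ = 0)
    -- an involutive automorphism σ preserving B
    (σ : g →ₗ⁅ℝ⁆ g)
    (hσ2 : ∀ x : g, σ (σ x) = x)
    (hσB : ∀ x y : g, B (σ x) (σ y) = B x y)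
    -- a ∈ g', k = g^a, m = k^⊥
    (a : g) (ha : σ a = -a)
    (k m : Submodule ℝ g)
    (hk : ∀ z : g, z ∈ k ↔ ⁅a, z⁆ = 0)
    (hm : ∀ y : g, y ∈ m ↔ ∀ z ∈ k, B z y = 0)
    -- P : the orthogonal projection of g onto m̃ = m ∩ g̃
    (P : g →ₗ[ℝ] g)
    (hPmem : ∀ v : g, P v ∈ m ∧ σ (P v) = P v)
    (hPorth : ∀ v w : g, w ∈ m → σ w = w → B (v - P v) w = 0)
    -- x ∈ m̃
    (x : g) (hx : x ∈ m) (hxσ : σ x = x)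
    -- L ⊆ m(x) is maximal isotropic w.r.t. B_x(y₁,y₂) = ⟨x,[y₁,y₂]⟩
    (L : Submodule ℝ g)
    (hLsub : ∀ y ∈ L, y ∈ m ∧ ⁅x, y⁆ ∈ m)
    (hLiso : ∀ y1 ∈ L, ∀ y2 ∈ L, B x ⁅y1, y2⁆ = 0)
    (hLmax : ∀ y : g, y ∈ m → ⁅x, y⁆ ∈ m → (∀ z ∈ L, B x ⁅y, z⁆ = 0) → y ∈ L)
    -- L̃ = P(L) is contained in m̃(x) and is isotropic for the restricted form
    (hLt_sub : ∀ u ∈ P '' (L : Set g), u ∈ m ∧ σ u = u ∧ ⁅x, u⁆ ∈ m ∧ σ ⁅x, u⁆ = ⁅x, u⁆)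
    (hLt_iso : ∀ u ∈ P '' (L : Set g), ∀ v ∈ P '' (L : Set g), B x ⁅u, v⁆ = 0) :
    -- then L̃ is maximal isotropic in m̃(x)
    ∀ y : g, y ∈ m → σ y = y → ⁅x, y⁆ ∈ m → σ ⁅x, y⁆ = ⁅x, y⁆ →
      (∀ z ∈ P '' (L : Set g), B x ⁅y, z⁆ = 0) → y ∈ P '' (L : Set g) := by
  intro y hym hyσ hyxm hyxσ hyz
  have hyL : y ∈ L := by
    refine hLmax y hym hyxm ?_
    intro z hz
    have h1 : B x ⁅y, P z⁆ = 0 := hyz (P z) ⟨z, hz, rfl⟩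
    have h2 : B x ⁅y, z - P z⁆ = 0 := by
      have hadj := hinv x (z - P z) y
      have horth : B (z - P z) ⁅x, y⁆ = 0 := hPorth z ⁅x, y⁆ hyxm hyxσ
      have h0 : B ⁅x, y⁆ (z - P z) = 0 := by rw [hsymm]; exact horth
      have hneg : B ⁅y, x⁆ (z - P z) = 0 := by
        rw [← lie_skew y x, map_neg, LinearMap.neg_apply, h0, neg_zero]
      linarith [hadj]
    have : ⁅y, z⁆ = ⁅y, P z⁆ + ⁅y, z - P z⁆ := by
      rw [← lie_add]; congr 1; abel
    rw [this, map_add, h1, h2, add_zero]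
  have hPy : P y = y := by
    by_contra h
    have hd : y - P y ≠ 0 := fun hc => h (by
      have h2 := sub_eq_zero.mp hc; exact h2.symm
      )
    have hmem : y - P y ∈ m := Submodule.sub_mem m hym (hPmem y).1
    have hσd : σ (y - P y) = y - P y := by
      rw [map_sub, hyσ, (hPmem y).2]
    have := hPorth y (y - P y) hmem hσd
    exact absurd this (ne_of_gt (hpos _ hd))
  exact ⟨y, hyL, hPy⟩
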